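/- Under hypothesis (H), there exists C ≥ 0 such that x² ≤ C·Φ*(x) for all sufficiently large x ≥ 0, where Φ* is the Legendre transform of Φ. -/

import Mathlib

open Real

/-- Legendre–Fenchel transform of `Φ`. -/
noncomputable def legendre (Φ : ℝ → ℝ) (x : ℝ) : ℝ := ⨆ y : ℝ, (x * y - Φ y)

private lemma ratio_hasDeriv (Φ : ℝ → ℝ) (c : ℝ) (hd : Differentiable ℝ Φ)
    {y : ℝ} (hy : 0 < y) :
    HasDerivAt (fun z => Φ z * z ^ c)
      ((y * deriv Φ y + c * Φ y) * y ^ (c - 1)) y := by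
  have h1 := ((hd y).hasDerivAt).mul
      (Real.hasDerivAt_rpow_const (x := y) (p := c) (Or.inl hy.ne'))
  have h2 : y ^ (c - 1) * y = y ^ c := by
    rw [← Real.rpow_add_one hy.ne' (c - 1)]; norm_num
  exact h1.congr_deriv (by rw [← h2]; ring)

private lemma growth_lower (Φ : ℝ → ℝ) (p M : ℝ) (hM : 0 < M)
    (hd : Differentiable ℝ Φ)
    (hH : ∀ y ≥ M, p * Φ y ≤ y * deriv Φ y) :
    ∀ y ≥ M, Φ M * M ^ (-p) * y ^ p ≤ Φ y := by
  have hmono : MonotoneOn (fun z => Φ z * z ^ (-p)) (Set.Ici M) := by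
    apply monotoneOn_of_deriv_nonneg (convex_Ici M)
    · intro z hz
      exact ((ratio_hasDeriv Φ (-p) hd (lt_of_lt_of_le hM hz)).continuousAt).continuousWithinAt
    · intro z hz
      rw [interior_Ici] at hz
      exact ((ratio_hasDeriv Φ (-p) hd (hM.trans hz)).differentiableAt).differentiableWithinAt
    · intro z hz
      rw [interior_Ici] at hz
      have hz0 : 0 < z := hM.trans hz
      rw [(ratio_hasDeriv Φ (-p) hd hz0).deriv]
      have h1 : p * Φ z ≤ z * deriv Φ z := hH z hz.le
      have h2 : (0:ℝ) < z ^ (-p - 1) := Real.rpow_pos_of_pos hz0 _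
      nlinarith
  intro y hy
  have hy0 : 0 < y := lt_of_lt_of_le hM hy
  have h := hmono (Set.mem_Ici.mpr le_rfl) hy hy
  have h2 := mul_le_mul_of_nonneg_right h (Real.rpow_pos_of_pos hy0 p).le
  calc Φ M * M ^ (-p) * y ^ p ≤ Φ y * y ^ (-p) * y ^ p := h2
    _ = Φ y := by
        rw [mul_assoc, ← Real.rpow_add hy0, neg_add_cancel, Real.rpow_zero, mul_one]

private lemma growth_upper (Φ : ℝ → ℝ) (q M : ℝ) (hM : 0 < M)
    (hd : Differentiable ℝ Φ)
    (hH : ∀ y ≥ M, y * deriv Φ y ≤ q * Φ y) :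
    ∀ y ≥ M, Φ y ≤ Φ M * M ^ (-q) * y ^ q := by
  have hmono : AntitoneOn (fun z => Φ z * z ^ (-q)) (Set.Ici M) := by
    apply antitoneOn_of_deriv_nonpos (convex_Ici M)
    · intro z hz
      exact ((ratio_hasDeriv Φ (-q) hd (lt_of_lt_of_le hM hz)).continuousAt).continuousWithinAt
    · intro z hz
      rw [interior_Ici] at hz
      exact ((ratio_hasDeriv Φ (-q) hd (hM.trans hz)).differentiableAt).differentiableWithinAt
    · intro z hz
      rw [interior_Ici] at hz
      have hz0 : 0 < z := hM.trans hz
      rw [(ratio_hasDeriv Φ (-q) hd hz0).deriv]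
      have h1 : z * deriv Φ z ≤ q * Φ z := hH z hz.le
      have h2 : (0:ℝ) < z ^ (-q - 1) := Real.rpow_pos_of_pos hz0 _
      nlinarith
  intro y hy
  have hy0 : 0 < y := lt_of_lt_of_le hM hy
  have h := hmono (Set.mem_Ici.mpr le_rfl) hy hy
  have h2 := mul_le_mul_of_nonneg_right h (Real.rpow_pos_of_pos hy0 q).le
  calc Φ y = Φ y * y ^ (-q) * y ^ q := by
        rw [mul_assoc, ← Real.rpow_add hy0, neg_add_cancel, Real.rpow_zero, mul_one]
    _ ≤ Φ M * M ^ (-q) * y ^ q := h2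

theorem stmt4 (Φ : ℝ → ℝ) (ε M : ℝ)
    (hΦ : ContDiff ℝ 2 Φ) (hsym : ∀ x, Φ (-x) = Φ x)
    (hconv : ConvexOn ℝ Set.univ Φ)
    (hε : 0 < ε) (hε' : ε ≤ 1/2) (hM : 0 < M) (hΦM : 0 < Φ M)
    (hH : ∀ x ≥ M, (1 + ε) * Φ x ≤ x * deriv Φ x ∧ x * deriv Φ x ≤ (2 - ε) * Φ x) :
    ∃ C ≥ (0:ℝ), ∃ x₀ : ℝ, ∀ x ≥ x₀, 0 ≤ x → x ^ 2 ≤ C * legendre Φ x := by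
  have hd : Differentiable ℝ Φ := hΦ.differentiable (by norm_num)
  have hlow := growth_lower Φ (1 + ε) M hM hd (fun y hy => (hH y hy).1)
  have hup := growth_upper Φ (2 - ε) M hM hd (fun y hy => (hH y hy).2)
  set c := Φ M * M ^ (-(1 + ε)) with hc
  set d := Φ M * M ^ (-(2 - ε)) with hdd
  have hc0 : 0 < c := mul_pos hΦM (Real.rpow_pos_of_pos hM _)
  have hd0 : 0 < d := mul_pos hΦM (Real.rpow_pos_of_pos hM _)
  have hΦ0 : ∀ y, Φ 0 ≤ Φ y := by
    intro y
    have h := hconv.2 (Set.mem_univ y) (Set.mem_univ (-y))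
      (by norm_num : (0:ℝ) ≤ 1/2) (by norm_num : (0:ℝ) ≤ 1/2) (by norm_num)
    simp only [smul_eq_mul] at h
    have h0 : (1/2 : ℝ) * y + (1/2 : ℝ) * (-y) = 0 := by ring
    rw [h0, hsym] at h
    linarith
  refine ⟨2, by norm_num, max (M + 1) ((2 * d) ^ (1/ε) + 1), ?_⟩
  intro x hx hx0
  have hxM : M ≤ x := by
    have := le_max_left (M + 1) ((2 * d) ^ (1/ε) + 1)
    linarith
  have hxpos : 0 < x := lt_of_lt_of_le hM hxM
  have hxe : 2 * d ≤ x ^ ε := by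
    have h1 : (2 * d) ^ (1/ε) ≤ x := by
      have := le_max_right (M + 1) ((2 * d) ^ (1/ε) + 1)
      linarith
    have h4 := Real.rpow_le_rpow (Real.rpow_nonneg (by positivity) _) h1 hε.le
    rwa [← Real.rpow_mul (by positivity), one_div, inv_mul_cancel₀ hε.ne',
      Real.rpow_one] at h4
  have hΦx : Φ x ≤ x ^ 2 / 2 := by
    have h1 : Φ x ≤ d * x ^ (2 - ε) := hup x hxM
    have h2 : x ^ (2 - ε) * x ^ ε = x ^ 2 := by
      rw [← Real.rpow_add hxpos, show (2 - ε + ε : ℝ) = 2 by ring,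
        show ((2:ℝ) = ((2:ℕ):ℝ)) by norm_num, Real.rpow_natCast]
    have hxep : 0 < x ^ ε := Real.rpow_pos_of_pos hxpos _
    nlinarith [Real.rpow_pos_of_pos hxpos (2 - ε)]
  -- boundedness of the family in the supremum
  set Y := max M (((x + 1) / c) ^ (1/ε)) with hY
  have hY0 : 0 < Y := lt_of_lt_of_le hM (le_max_left _ _)
  have hkey : ∀ y, x * y - Φ y ≤ |x * Y| + |Φ 0| := by
    intro y
    rcases le_or_gt Y y with h | h
    · have hyM : M ≤ y := le_trans (le_max_left _ _) h
      have hy0 : 0 < y := lt_of_lt_of_le hM hyM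
      have h1 : c * y ^ (1 + ε) ≤ Φ y := hlow y hyM
      have h2 : (x + 1) / c ≤ y ^ ε := by
        have h3 : ((x + 1) / c) ^ (1/ε) ≤ y := le_trans (le_max_right _ _) h
        have h4 := Real.rpow_le_rpow (Real.rpow_nonneg (by positivity) _) h3 hε.le
        rwa [← Real.rpow_mul (by positivity), one_div, inv_mul_cancel₀ hε.ne',
          Real.rpow_one] at h4
      have h5 : y ^ (1 + ε) = y * y ^ ε := by
        rw [Real.rpow_add hy0, Real.rpow_one]
      have h6 : x + 1 ≤ c * y ^ ε := by
        have := mul_le_mul_of_nonneg_left h2 hc0.le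
        rwa [mul_div_cancel₀ _ hc0.ne'] at this
      have h7 : (x + 1) * y ≤ c * y ^ (1 + ε) := by
        rw [h5]
        nlinarith
      have : x * y - Φ y ≤ -y := by nlinarith
      have hB : (0:ℝ) ≤ |x * Y| + |Φ 0| := by positivity
      linarith
    · rcases le_or_gt 0 y with h0 | h0
      · have h1 : x * y ≤ x * Y := mul_le_mul_of_nonneg_left h.le hx0
        have h2 := hΦ0 y
        have h3 : x * Y ≤ |x * Y| := le_abs_self _
        have h4 : -|Φ 0| ≤ Φ 0 := neg_abs_le _
        linarith
      · have h1 : x * y ≤ 0 := mul_nonpos_of_nonneg_of_nonpos hx0 h0.le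
        have h2 := hΦ0 y
        have h4 : -|Φ 0| ≤ Φ 0 := neg_abs_le _
        have h5 : (0:ℝ) ≤ |x * Y| := abs_nonneg _
        linarith
  have hbdd : BddAbove (Set.range fun y => x * y - Φ y) := by
    refine ⟨|x * Y| + |Φ 0|, ?_⟩
    rintro _ ⟨y, rfl⟩
    exact hkey y
  have hle : x * x - Φ x ≤ legendre Φ x := le_ciSup hbdd x
  have hxx : x * x = x ^ 2 := (sq x).symm
  linarith
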